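/- Let (P₁,P₂,P₃,P₄) be nonzero null vectors in ℂ^{n,1}, pairwise linearly independent, with normalized Gram matrix G = (g_{ij}). Then X₁ = conj(g₁₃)·conj(g₂₄)/conj(g₁₄), X₂ = 1/conj(g₁₄), X₃ = 1/(g₁₃·conj(g₂₄)); and conversely g₁₃ = −e^{−i𝔸}, g₁₄ = 1/conj(X₂), g₂₄ = −(conj(X₁)/conj(X₂))·e^{i𝔸}, where 𝔸 = 𝔸(p₁,p₂,p₃). -/

import Mathlib

open Complex Matrix
open scoped ComplexConjugate

noncomputable section

/-- The Hermitian form of signature `(n,1)` on `ℂ^{n+1}`: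
`⟨Z,W⟩ = Z₁·conj W_{n+1} + Z₂·conj W₂ + ⋯ + Z_n·conj W_n + Z_{n+1}·conj W₁`. -/
def herm {n : ℕ} (Z W : Fin (n + 1) → ℂ) : ℂ :=
  Z 0 * conj (W (Fin.last n)) + Z (Fin.last n) * conj (W 0) +
    ∑ i ∈ Finset.univ.filter (fun i : Fin (n + 1) => i ≠ 0 ∧ i ≠ Fin.last n),
      Z i * conj (W i)

/-- The Gram matrix of a quadruple of vectors. -/
def gram {n : ℕ} (P : Fin 4 → Fin (n + 1) → ℂ) : Matrix (Fin 4) (Fin 4) ℂ :=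
  fun i j => herm (P i) (P j)

/-- A quadruple of nonzero null vectors, pairwise linearly independent. -/
def IsNullQuadruple {n : ℕ} (P : Fin 4 → Fin (n + 1) → ℂ) : Prop :=
  (∀ i, P i ≠ 0) ∧ (∀ i, herm (P i) (P i) = 0) ∧
    ∀ i j, i ≠ j → LinearIndependent ℂ ![P i, P j]

/-- The Korányi–Reimann complex cross-ratio. -/
def crossRatio {n : ℕ} (P₁ P₂ P₃ P₄ : Fin (n + 1) → ℂ) : ℂ :=
  (herm P₃ P₁ * herm P₄ P₂) / (herm P₄ P₁ * herm P₃ P₂)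

/-- Cartan's angular invariant. -/
def cartan {n : ℕ} (P₁ P₂ P₃ : Fin (n + 1) → ℂ) : ℝ :=
  (-(herm P₁ P₂ * herm P₂ P₃ * herm P₃ P₁)).arg

/-- `G` is the normalized Gram matrix of the quadruple `P`. -/
def IsNormalizedGram {n : ℕ} (P : Fin 4 → Fin (n + 1) → ℂ)
    (G : Matrix (Fin 4) (Fin 4) ℂ) : Prop :=
  (∃ d : Fin 4 → ℂ, (∀ i, d i ≠ 0) ∧
      G = (Matrix.diagonal d)ᴴ * gram P * Matrix.diagonal d) ∧
    G 0 1 = 1 ∧ G 1 2 = 1 ∧ G 2 3 = 1 ∧ ‖G 0 2‖ = 1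

/-- Two quadruples are congruent if a linear map preserving the Hermitian form
sends one to the other up to nonzero scalars. -/
def QuadCongruent {n : ℕ} (P P' : Fin 4 → Fin (n + 1) → ℂ) : Prop :=
  ∃ A : (Fin (n + 1) → ℂ) →ₗ[ℂ] (Fin (n + 1) → ℂ),
    (∀ Z W, herm (A Z) (A W) = herm Z W) ∧
    ∃ lam : Fin 4 → ℂ, (∀ i, lam i ≠ 0) ∧ ∀ i, A (P i) = lam i • P' i


lemma herm_conj {n : ℕ} (Z W : Fin (n + 1) → ℂ) : herm W Z = conj (herm Z W) := by
  simp only [herm, map_add, _root_.map_mul, map_sum, Complex.conj_conj]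
  ring_nf
  exact congrArg₂ (· + ·) rfl (Finset.sum_congr rfl fun i _ => mul_comm _ _)

lemma herm_smul_left {n : ℕ} (a : ℂ) (Z W : Fin (n + 1) → ℂ) :
    herm (a • Z) W = a * herm Z W := by
  simp only [herm, Pi.smul_apply, smul_eq_mul, mul_add, Finset.mul_sum, mul_assoc]

lemma herm_sub_left {n : ℕ} (Z Z' W : Fin (n + 1) → ℂ) :
    herm (Z - Z') W = herm Z W - herm Z' W := by
  simp only [herm, Pi.sub_apply, sub_mul, Finset.sum_sub_distrib]
  ring

lemma herm_smul_right {n : ℕ} (a : ℂ) (Z W : Fin (n + 1) → ℂ) :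
    herm Z (a • W) = conj a * herm Z W := by
  rw [herm_conj, herm_smul_left, _root_.map_mul, ← herm_conj]

lemma herm_sub_right {n : ℕ} (Z W W' : Fin (n + 1) → ℂ) :
    herm Z (W - W') = herm Z W - herm Z W' := by
  rw [herm_conj, herm_sub_left, map_sub, ← herm_conj, ← herm_conj]

lemma herm_self_eq_zero {n : ℕ} {Z : Fin (n + 1) → ℂ} (h0 : Z 0 = Z (Fin.last n))
    (h : herm Z Z = 0) : Z = 0 := by
  rw [herm, h0] at h
  simp only [Complex.mul_conj] at h
  have key : (normSq (Z (Fin.last n)) + normSq (Z (Fin.last n))) +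
      ∑ i ∈ Finset.univ.filter (fun i : Fin (n + 1) => i ≠ 0 ∧ i ≠ Fin.last n),
        normSq (Z i) = 0 := by exact_mod_cast h
  have hsum : (0:ℝ) ≤ ∑ i ∈ Finset.univ.filter
      (fun i : Fin (n + 1) => i ≠ 0 ∧ i ≠ Fin.last n), normSq (Z i) :=
    Finset.sum_nonneg fun i _ => normSq_nonneg _
  have h1 : normSq (Z (Fin.last n)) = 0 := by nlinarith [normSq_nonneg (Z (Fin.last n))]
  have h2 : ∑ i ∈ Finset.univ.filter
      (fun i : Fin (n + 1) => i ≠ 0 ∧ i ≠ Fin.last n), normSq (Z i) = 0 := by linarith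
  have h3 := (Finset.sum_eq_zero_iff_of_nonneg (fun i _ => normSq_nonneg (Z i))).mp h2
  funext i
  show Z i = 0
  by_cases hi0 : i = 0
  · subst hi0; rw [h0]; exact normSq_eq_zero.mp h1
  by_cases hil : i = Fin.last n
  · subst hil; exact normSq_eq_zero.mp h1
  · exact normSq_eq_zero.mp (h3 i (Finset.mem_filter.mpr ⟨Finset.mem_univ _, hi0, hil⟩))

lemma herm_ne_zero {n : ℕ} {Z W : Fin (n + 1) → ℂ}
    (hZ : herm Z Z = 0) (hW : herm W W = 0)
    (hind : LinearIndependent ℂ ![Z, W]) : herm Z W ≠ 0 := by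
  intro h
  have hWZ : herm W Z = 0 := by rw [herm_conj, h, map_zero]
  set s : ℂ := W 0 - W (Fin.last n) with hs
  set t : ℂ := Z 0 - Z (Fin.last n) with ht
  have hR : herm (s • Z - t • W) (s • Z - t • W) = 0 := by
    simp only [herm_sub_left, herm_sub_right, herm_smul_left, herm_smul_right, hZ, hW, h, hWZ]
    ring
  have hR0 : (s • Z - t • W) 0 = (s • Z - t • W) (Fin.last n) := by
    simp only [Pi.sub_apply, Pi.smul_apply, smul_eq_mul, hs, ht]; ring
  have hR' : s • Z - t • W = 0 := herm_self_eq_zero hR0 hR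
  have hpair := LinearIndependent.pair_iff.mp hind s (-t) (by
    rw [neg_smul, ← sub_eq_add_neg]; exact hR')
  have hsz : s = 0 := hpair.1
  have htz : t = 0 := neg_eq_zero.mp hpair.2
  have hZ0 : Z 0 = Z (Fin.last n) := by
    have := htz; rw [ht, sub_eq_zero] at this; exact this
  exact hind.ne_zero 0 (by simpa using herm_self_eq_zero hZ0 hZ)

/-- cross-ratios in terms of the normalized Gram matrix, and
conversely the normalized Gram entries in terms of `X₁, X₂, 𝔸`. -/
theorem stmt4 (n : ℕ) (P : Fin 4 → Fin (n + 1) → ℂ) (hP : IsNullQuadruple P)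
    (G : Matrix (Fin 4) (Fin 4) ℂ) (hG : IsNormalizedGram P G)
    (X₁ X₂ X₃ : ℂ) (A : ℝ)
    (hX₁ : X₁ = crossRatio (P 0) (P 1) (P 2) (P 3))
    (hX₂ : X₂ = crossRatio (P 0) (P 2) (P 1) (P 3))
    (hX₃ : X₃ = crossRatio (P 1) (P 2) (P 0) (P 3))
    (hA : A = cartan (P 0) (P 1) (P 2)) :
    X₁ = conj (G 0 2) * conj (G 1 3) / conj (G 0 3) ∧
    X₂ = 1 / conj (G 0 3) ∧
    X₃ = 1 / (G 0 2 * conj (G 1 3)) ∧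
    G 0 2 = -Complex.exp (-(Complex.I * (A : ℂ))) ∧
    G 0 3 = 1 / conj X₂ ∧
    G 1 3 = -(conj X₁ / conj X₂) * Complex.exp (Complex.I * (A : ℂ)) := by

  obtain ⟨hPne, hnull, hli⟩ := hP
  obtain ⟨⟨d, hd, hGd⟩, hG01, hG12, hG23, hG02abs⟩ := hG
  have hGij : ∀ i j, G i j = conj (d i) * herm (P i) (P j) * d j := by
    intro i j
    rw [hGd, Matrix.diagonal_conjTranspose, Matrix.mul_diagonal, Matrix.diagonal_mul]
    simp [_root_.gram, Complex.star_def]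
  have hC : ∀ z : ℂ, z ≠ 0 → conj z ≠ 0 := fun z hz h => hz (by simpa using congrArg conj h)
  have hcd : ∀ i, conj (d i) ≠ 0 := fun i => hC _ (hd i)
  have hne : ∀ i j, i ≠ j → herm (P i) (P j) ≠ 0 := fun i j hij =>
    herm_ne_zero (hnull i) (hnull j) (hli i j hij)
  have h02ne : herm (P 0) (P 2) ≠ 0 := hne 0 2 (by decide)
  have h13ne : herm (P 1) (P 3) ≠ 0 := hne 1 3 (by decide)
  have h03ne : herm (P 0) (P 3) ≠ 0 := hne 0 3 (by decide)
  have h12ne : herm (P 1) (P 2) ≠ 0 := hne 1 2 (by decide)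
  have hG03ne : G 0 3 ≠ 0 := by
    rw [hGij 0 3]; exact mul_ne_zero (mul_ne_zero (hcd 0) h03ne) (hd 3)
  have hG02ne : G 0 2 ≠ 0 := by
    rw [hGij 0 2]; exact mul_ne_zero (mul_ne_zero (hcd 0) h02ne) (hd 2)
  have hG13ne : G 1 3 ≠ 0 := by
    rw [hGij 1 3]; exact mul_ne_zero (mul_ne_zero (hcd 1) h13ne) (hd 3)
  have E1 : conj (d 0) * herm (P 0) (P 1) * d 1 = 1 := (hGij 0 1).symm.trans hG01
  have E2 : conj (d 1) * herm (P 1) (P 2) * d 2 = 1 := (hGij 1 2).symm.trans hG12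
  have E3 : conj (d 2) * herm (P 2) (P 3) * d 3 = 1 := (hGij 2 3).symm.trans hG23
  have E1c := congrArg conj E1
  have E2c := congrArg conj E2
  have E3c := congrArg conj E3
  simp only [_root_.map_mul, _root_.map_one, Complex.conj_conj] at E1c E2c E3c
  have hg1 : X₁ = conj (G 0 2) * conj (G 1 3) / conj (G 0 3) := by
    rw [hX₁, crossRatio, herm_conj (P 0) (P 2), herm_conj (P 1) (P 3),
      herm_conj (P 0) (P 3), herm_conj (P 1) (P 2),
      div_eq_div_iff (mul_ne_zero (hC _ h03ne) (hC _ h12ne)) (hC _ hG03ne),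
      hGij 0 2, hGij 1 3, hGij 0 3]
    simp only [_root_.map_mul, Complex.conj_conj]
    linear_combination (-(d 0 * conj (herm (P 0) (P 2)) * conj (herm (P 1) (P 3)) *
      conj (herm (P 0) (P 3)) * conj (d 3))) * E2c
  have hg2 : X₂ = 1 / conj (G 0 3) := by
    rw [hX₂, crossRatio, herm_conj (P 0) (P 1), herm_conj (P 2) (P 3),
      herm_conj (P 0) (P 3),
      div_eq_div_iff (mul_ne_zero (hC _ h03ne) h12ne) (hC _ hG03ne),
      hGij 0 3]
    simp only [_root_.map_mul, Complex.conj_conj]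
    linear_combination
      (-(conj (herm (P 0) (P 3)) * d 0 * conj (herm (P 0) (P 1)) *
        conj (herm (P 2) (P 3)) * conj (d 3))) * E2 +
      (conj (herm (P 0) (P 3)) * herm (P 1) (P 2) * d 2 * conj (herm (P 2) (P 3)) *
        conj (d 3)) * E1c +
      (conj (herm (P 0) (P 3)) * herm (P 1) (P 2)) * E3c
  have hg3 : X₃ = 1 / (G 0 2 * conj (G 1 3)) := by
    rw [hX₃, crossRatio, herm_conj (P 2) (P 3), herm_conj (P 1) (P 3),
      div_eq_div_iff (mul_ne_zero (hC _ h13ne) h02ne)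
        (mul_ne_zero hG02ne (hC _ hG13ne)),
      hGij 0 2, hGij 1 3]
    simp only [_root_.map_mul, Complex.conj_conj]
    linear_combination
      (conj (herm (P 1) (P 3)) * herm (P 0) (P 2) * d 2 * conj (herm (P 2) (P 3)) *
        conj (d 3)) * E1 +
      (conj (herm (P 1) (P 3)) * herm (P 0) (P 2)) * E3c
  have hr : (0:ℝ) < normSq (d 0) * normSq (d 1) * normSq (d 2) :=
    mul_pos (mul_pos (normSq_pos.mpr (hd 0)) (normSq_pos.mpr (hd 1))) (normSq_pos.mpr (hd 2))
  have key : ((normSq (d 0) * normSq (d 1) * normSq (d 2) : ℝ) : ℂ) *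
      (-(herm (P 0) (P 1) * herm (P 1) (P 2) * herm (P 2) (P 0))) = -conj (G 0 2) := by
    rw [herm_conj (P 0) (P 2), hGij 0 2]
    simp only [_root_.map_mul, Complex.conj_conj]
    push_cast
    rw [← Complex.mul_conj, ← Complex.mul_conj, ← Complex.mul_conj]
    linear_combination
      (-(d 0 * conj (d 2) * conj (herm (P 0) (P 2)) *
        (conj (d 1) * herm (P 1) (P 2) * d 2))) * E1 +
      (-(d 0 * conj (d 2) * conj (herm (P 0) (P 2)))) * E2
  have hA' : A = Complex.arg (-conj (G 0 2)) := by
    rw [hA, cartan, ← Complex.arg_real_mul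
      (-(herm (P 0) (P 1) * herm (P 1) (P 2) * herm (P 2) (P 0))) hr, key]
  have habs2 : ‖-conj (G 0 2)‖ = 1 := by
    rw [norm_neg, Complex.norm_conj]; exact hG02abs
  have hexp : Complex.exp ((A : ℂ) * Complex.I) = -conj (G 0 2) := by
    have h := Complex.norm_mul_exp_arg_mul_I (-conj (G 0 2))
    rw [habs2] at h
    rw [hA']
    simpa using h
  have hg4 : G 0 2 = -Complex.exp (-(Complex.I * (A : ℂ))) := by
    have h := congrArg conj hexp
    rw [← Complex.exp_conj] at h
    simp only [_root_.map_mul, map_neg, Complex.conj_conj, Complex.conj_ofReal,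
      Complex.conj_I] at h
    rw [show (-(Complex.I * (A : ℂ))) = (A : ℂ) * -Complex.I by ring, h]
    ring
  have hg5 : G 0 3 = 1 / conj X₂ := by
    rw [hg2, map_div₀, _root_.map_one, Complex.conj_conj, one_div_one_div]
  have hg6 : G 1 3 = -(conj X₁ / conj X₂) * Complex.exp (Complex.I * (A : ℂ)) := by
    have hX1c : conj X₁ = G 0 2 * G 1 3 / G 0 3 := by
      rw [hg1]; simp [map_div₀, _root_.map_mul, Complex.conj_conj]
    have hX2c : conj X₂ = 1 / G 0 3 := by
      rw [hg2]; simp [map_div₀]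
    have hexpI : Complex.exp (Complex.I * (A : ℂ)) = -conj (G 0 2) := by
      rw [mul_comm]; exact hexp
    have hcc : G 0 2 * conj (G 0 2) = 1 := by
      rw [Complex.mul_conj, Complex.normSq_eq_norm_sq, hG02abs]; norm_num
    rw [hX1c, hX2c, hexpI]
    have hdd : (G 0 2 * G 1 3 / G 0 3) / (1 / G 0 3) = G 0 2 * G 1 3 := by
      field_simp
    rw [hdd]
    linear_combination (-(G 1 3)) * hcc
  exact ⟨hg1, hg2, hg3, hg4, hg5, hg6⟩
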